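/- Let r > 0 and u ∈ C_b([0,∞),X). Then u ∈ PSAP_{ω,r}(X) if and only if for every ε > 0, lim_{T→∞} (1/T) mes(M_{T,ε}(u)) = 0, where M_{T,ε}(u) = {t ∈ [r,T] : sup_{τ∈[t−r,t]} ‖u(τ+ω)−u(τ)‖ ≥ ε} and mes denotes the Lebesgue measure. -/

import Mathlib

open MeasureTheory Filter Set

/-- `u ∈ PSAP_{ω,r}(X)`: pseudo S-asymptotically ω-periodic of class r. -/
def PSAPclass {X : Type*} [NormedAddCommGroup X] (ω r : ℝ) (u : ℝ → X) : Prop :=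
  Tendsto (fun T : ℝ => (1 / T) * ∫ s in r..T, ⨆ τ ∈ Set.Icc (s - r) s, ‖u (τ + ω) - u τ‖)
    atTop (nhds 0)

/-- Remark 2.3: `u ∈ PSAP_{ω,r}(X)` iff for every ε > 0,
`(1/T) mes(M_{T,ε}(u)) → 0` where
`M_{T,ε}(u) = {t ∈ [r,T] : sup_{τ∈[t−r,t]} ‖u(τ+ω)−u(τ)‖ ≥ ε}`. -/
theorem psapClass_iff_measure {X : Type*} [NormedAddCommGroup X]
    (r ω : ℝ) (hr : 0 < r) (hω : 0 < ω) (u : ℝ → X)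
    (hcont : ContinuousOn u (Set.Ici 0)) (hbdd : ∃ B, ∀ t ≥ (0:ℝ), ‖u t‖ ≤ B) :
    PSAPclass ω r u ↔
      ∀ ε > 0,
        Tendsto (fun T : ℝ =>
            (volume {t : ℝ | t ∈ Set.Icc r T ∧
              ε ≤ ⨆ τ ∈ Set.Icc (t - r) t, ‖u (τ + ω) - u τ‖}).toReal / T)
          atTop (nhds 0) := by
  classical
  obtain ⟨B, hB⟩ := hbdd
  have hB0 : (0:ℝ) ≤ B := le_trans (norm_nonneg _) (hB 0 le_rfl)
  have hmain : ∀ F : ℝ → ℝ,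
      (∀ s, F s = ⨆ τ ∈ Set.Icc (s - r) s, ‖u (τ + ω) - u τ‖) →
      (Tendsto (fun T : ℝ => (1 / T) * ∫ s in r..T, F s) atTop (nhds 0) ↔
        ∀ ε > 0, Tendsto (fun T : ℝ =>
          (volume {t : ℝ | t ∈ Set.Icc r T ∧ ε ≤ F t}).toReal / T) atTop (nhds 0)) := by
    intro F hFdef
    -- pointwise bound on the difference function
    have hg2B : ∀ τ : ℝ, 0 ≤ τ → ‖u (τ + ω) - u τ‖ ≤ 2 * B := by
      intro τ hτ
      calc ‖u (τ + ω) - u τ‖ ≤ ‖u (τ + ω)‖ + ‖u τ‖ := norm_sub_le _ _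
        _ ≤ B + B := add_le_add (hB _ (by linarith)) (hB _ hτ)
        _ = 2 * B := by ring
    have hmemnn : ∀ s : ℝ, r ≤ s → ∀ τ : ℝ, τ ∈ Set.Icc (s - r) s → (0:ℝ) ≤ τ := by
      intro s hs τ hτ
      have := hτ.1; linarith
    have hF0 : ∀ s, 0 ≤ F s := by
      intro s
      rw [hFdef s]
      exact Real.iSup_nonneg fun τ => Real.iSup_nonneg fun _ => norm_nonneg _
    have hFle : ∀ s : ℝ, r ≤ s → F s ≤ 2 * B := by
      intro s hs
      rw [hFdef s]
      exact Real.iSup_le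
        (fun τ => Real.iSup_le (fun hτ => hg2B τ (hmemnn s hs τ hτ)) (by positivity))
        (by positivity)
    have hbddA : ∀ s : ℝ, r ≤ s →
        BddAbove (Set.range fun τ : ℝ => ⨆ _ : τ ∈ Set.Icc (s - r) s, ‖u (τ + ω) - u τ‖) := by
      intro s hs
      refine ⟨2 * B, ?_⟩
      rintro x ⟨τ, rfl⟩
      exact Real.iSup_le (fun hτ => hg2B τ (hmemnn s hs τ hτ)) (by positivity)
    -- the measurable comparison function via rational suprema
    set G : ℝ → ℝ := fun s => ⨆ q : ℚ,
      if (0:ℝ) ≤ (q:ℝ) then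
        (Set.Icc (q:ℝ) ((q:ℝ) + r)).indicator (fun _ => ‖u ((q:ℝ) + ω) - u (q:ℝ)‖) s
      else 0 with hGdef
    have hGmeas : Measurable G := by
      apply Measurable.iSup
      intro q
      by_cases h : (0:ℝ) ≤ (q:ℝ)
      · simp only [if_pos h]
        exact measurable_const.indicator measurableSet_Icc
      · simp only [if_neg h]
        exact measurable_const
    have hbddG : ∀ s : ℝ, BddAbove (Set.range fun q : ℚ =>
        if (0:ℝ) ≤ (q:ℝ) then
          (Set.Icc (q:ℝ) ((q:ℝ) + r)).indicator (fun _ => ‖u ((q:ℝ) + ω) - u (q:ℝ)‖) s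
        else 0) := by
      intro s
      refine ⟨2 * B, ?_⟩
      rintro x ⟨q, rfl⟩
      by_cases h : (0:ℝ) ≤ (q:ℝ)
      · simp only [if_pos h]
        by_cases hs : s ∈ Set.Icc (q:ℝ) ((q:ℝ) + r)
        · rw [Set.indicator_of_mem hs]
          exact hg2B _ h
        · rw [Set.indicator_of_notMem hs]; positivity
      · simp only [if_neg h]; positivity
    have hG0 : ∀ s, 0 ≤ G s := by
      intro s
      refine Real.iSup_nonneg fun q => ?_
      by_cases h : (0:ℝ) ≤ (q:ℝ)
      · simp only [if_pos h]
        exact Set.indicator_nonneg (fun _ _ => norm_nonneg _) _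
      · simp only [if_neg h]; exact le_rfl
    -- continuity of the difference function on [0,∞)
    have hgc : ContinuousOn (fun τ : ℝ => ‖u (τ + ω) - u τ‖) (Set.Ici (0:ℝ)) := by
      have h1 : ContinuousOn (fun τ : ℝ => u (τ + ω)) (Set.Ici (0:ℝ)) := by
        refine ContinuousOn.comp hcont ((continuous_add_right ω).continuousOn) ?_
        intro τ hτ
        simp only [Set.mem_Ici] at *
        linarith
      exact (h1.sub hcont).norm
    -- F = G on [r,∞)
    have hFG : ∀ s : ℝ, r ≤ s → F s = G s := by
      intro s hs
      apply le_antisymm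
      · -- F ≤ G
        rw [hFdef s]
        refine Real.iSup_le (fun τ => Real.iSup_le (fun hτ => ?_) (hG0 s)) (hG0 s)
        refine le_of_forall_pos_le_add fun δ hδ => ?_
        have hτ1 : s - r ≤ τ := hτ.1
        have hτ2 : τ ≤ s := hτ.2
        have hτ0 : (0:ℝ) ≤ τ := hmemnn s hs τ hτ
        have hc := hgc τ hτ0
        rw [Metric.continuousWithinAt_iff] at hc
        obtain ⟨η, hη, hc⟩ := hc δ hδ
        have hab : max (s - r) (τ - η) < min s (τ + η) := by
          rw [max_lt_iff, lt_min_iff, lt_min_iff]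
          exact ⟨⟨by linarith, by linarith⟩, ⟨by linarith, by linarith⟩⟩
        obtain ⟨q, hq1, hq2⟩ := exists_rat_btwn hab
        have ha1 : s - r ≤ max (s - r) (τ - η) := le_max_left _ _
        have ha2 : τ - η ≤ max (s - r) (τ - η) := le_max_right _ _
        have hb1 : min s (τ + η) ≤ s := min_le_left _ _
        have hb2 : min s (τ + η) ≤ τ + η := min_le_right _ _
        have hq0 : (0:ℝ) ≤ (q:ℝ) := by linarith
        have hqmem : s ∈ Set.Icc (q:ℝ) ((q:ℝ) + r) := ⟨by linarith, by linarith⟩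
        have hqd : dist (q:ℝ) τ < η := by
          rw [Real.dist_eq, abs_lt]
          constructor <;> linarith
        have hclose := hc (Set.mem_Ici.mpr hq0) hqd
        rw [Real.dist_eq, abs_lt] at hclose
        have hle : ‖u ((q:ℝ) + ω) - u (q:ℝ)‖ ≤ G s := by
          have h2 := le_ciSup (hbddG s) q
          rw [if_pos hq0, Set.indicator_of_mem hqmem] at h2
          exact h2
        linarith [hclose.1]
      · -- G ≤ F
        refine Real.iSup_le (fun q => ?_) (hF0 s)
        by_cases h : (0:ℝ) ≤ (q:ℝ)
        · simp only [if_pos h]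
          by_cases hmem : s ∈ Set.Icc (q:ℝ) ((q:ℝ) + r)
          · rw [Set.indicator_of_mem hmem]
            have hqI : (q:ℝ) ∈ Set.Icc (s - r) s := ⟨by linarith [hmem.2], hmem.1⟩
            have h1 : ‖u ((q:ℝ) + ω) - u (q:ℝ)‖ =
                ⨆ _ : (q:ℝ) ∈ Set.Icc (s - r) s, ‖u ((q:ℝ) + ω) - u (q:ℝ)‖ :=
              (ciSup_pos (f := fun _ => ‖u ((q:ℝ) + ω) - u (q:ℝ)‖) hqI).symm
            rw [h1, hFdef s]
            exact le_ciSup (hbddA s hs) (q:ℝ)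
          · rw [Set.indicator_of_notMem hmem]; exact hF0 s
        · simp only [if_neg h]; exact hF0 s
    -- integrability of F on [r,T]
    have hInt : ∀ T : ℝ, IntegrableOn F (Set.Icc r T) volume := by
      intro T
      have haesm : AEStronglyMeasurable F (volume.restrict (Set.Icc r T)) := by
        refine (hGmeas.aestronglyMeasurable.restrict).congr ?_
        refine (ae_restrict_iff' measurableSet_Icc).2 (ae_of_all _ fun s hs => ?_)
        exact (hFG s hs.1).symm
      refine Integrable.mono' (g := fun _ => 2 * B)
        (integrableOn_const measure_Icc_lt_top.ne) haesm ?_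
      refine (ae_restrict_iff' measurableSet_Icc).2 (ae_of_all _ fun s hs => ?_)
      rw [Real.norm_of_nonneg (hF0 s)]
      exact hFle s hs.1
    constructor
    · -- forward: Markov's inequality
      intro h ε hε
      have hub : ∀ᶠ T in atTop,
          (volume {t : ℝ | t ∈ Set.Icc r T ∧ ε ≤ F t}).toReal / T ≤
            (1 / ε) * ((1 / T) * ∫ s in r..T, F s) := by
        filter_upwards [eventually_ge_atTop (max r 1)] with T hT
        have hrT : r ≤ T := le_trans (le_max_left _ _) hT
        have hT0 : (0:ℝ) < T := lt_of_lt_of_le one_pos (le_trans (le_max_right _ _) hT)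
        have hmark := mul_meas_ge_le_integral_of_nonneg
          (μ := volume.restrict (Set.Icc r T)) (f := F)
          ((ae_restrict_iff' measurableSet_Icc).2 (ae_of_all _ fun s _ => hF0 s)) (hInt T) ε
        simp only [Measure.real] at hmark
        rw [Measure.restrict_apply' measurableSet_Icc] at hmark
        have hset : {x : ℝ | ε ≤ F x} ∩ Set.Icc r T = {t : ℝ | t ∈ Set.Icc r T ∧ ε ≤ F t} := by
          ext x
          simp only [Set.mem_inter_iff, Set.mem_setOf_eq]
          exact and_comm
        rw [hset] at hmark
        have hIeq : (∫ s in r..T, F s) = ∫ s in Set.Icc r T, F s := by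
          rw [intervalIntegral.integral_of_le hrT, integral_Icc_eq_integral_Ioc]
        rw [hIeq]
        have hrw : (1 / ε) * ((1 / T) * ∫ s in Set.Icc r T, F s)
            = (∫ s in Set.Icc r T, F s) / (ε * T) := by
          field_simp
        rw [hrw, div_le_div_iff₀ hT0 (by positivity)]
        nlinarith [mul_le_mul_of_nonneg_right hmark hT0.le]
      have hlb : ∀ᶠ T in atTop,
          (0:ℝ) ≤ (volume {t : ℝ | t ∈ Set.Icc r T ∧ ε ≤ F t}).toReal / T := by
        filter_upwards [eventually_ge_atTop (1:ℝ)] with T hT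
        have : (0:ℝ) < T := lt_of_lt_of_le one_pos hT
        positivity
      have hlim : Tendsto (fun T : ℝ => (1 / ε) * ((1 / T) * ∫ s in r..T, F s))
          atTop (nhds 0) := by
        simpa using h.const_mul (1 / ε)
      exact tendsto_of_tendsto_of_tendsto_of_le_of_le' tendsto_const_nhds hlim hlb hub
    · -- backward
      intro H
      refine tendsto_order.2 ⟨fun a ha => ?_, fun a ha => ?_⟩
      · -- eventually a < value (a < 0)
        filter_upwards [eventually_ge_atTop (max r 1)] with T hT
        have hrT : r ≤ T := le_trans (le_max_left _ _) hT
        have hT0 : (0:ℝ) < T := lt_of_lt_of_le one_pos (le_trans (le_max_right _ _) hT)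
        have hnn : (0:ℝ) ≤ (1 / T) * ∫ s in r..T, F s :=
          mul_nonneg (by positivity)
            (intervalIntegral.integral_nonneg hrT fun s _ => hF0 s)
        linarith
      · -- eventually value < a (0 < a)
        have hε' : (0:ℝ) < a / 2 := by linarith
        have h2 : Tendsto (fun T : ℝ =>
            (2 * B) * ((volume {t : ℝ | t ∈ Set.Icc r T ∧ a / 2 ≤ F t}).toReal / T))
            atTop (nhds 0) := by
          simpa using (H (a / 2) hε').const_mul (2 * B)
        filter_upwards [eventually_ge_atTop (max r 1), h2.eventually_lt_const hε']
          with T hT h2T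
        have hrT : r ≤ T := le_trans (le_max_left _ _) hT
        have hT0 : (0:ℝ) < T := lt_of_lt_of_le one_pos (le_trans (le_max_right _ _) hT)
        set S : Set ℝ := {s : ℝ | a / 2 ≤ G s} with hSdef
        have hSmeas : MeasurableSet S := measurableSet_le measurable_const hGmeas
        have hIntIoc : IntegrableOn F (Set.Ioc r T) volume :=
          (hInt T).mono_set Set.Ioc_subset_Icc_self
        have hsplit := integral_inter_add_diff (s := Set.Ioc r T) (t := S)
          (μ := volume) (f := F) hSmeas hIntIoc
        set v : ℝ := (volume {t : ℝ | t ∈ Set.Icc r T ∧ a / 2 ≤ F t}).toReal with hvdef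
        have hvnn : 0 ≤ v := ENNReal.toReal_nonneg
        have hMne : volume {t : ℝ | t ∈ Set.Icc r T ∧ a / 2 ≤ F t} ≠ ⊤ := by
          have hsub : {t : ℝ | t ∈ Set.Icc r T ∧ a / 2 ≤ F t} ⊆ Set.Icc r T :=
            fun t ht => ht.1
          exact ne_top_of_le_ne_top (measure_Icc_lt_top (a := r) (b := T)).ne
            (measure_mono hsub)
        -- first piece
        have hb1 : (∫ x in Set.Ioc r T ∩ S, F x) ≤ 2 * B * v := by
          have hsub : Set.Ioc r T ∩ S ⊆ Set.Icc r T :=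
            fun x hx => Set.Ioc_subset_Icc_self hx.1
          have hfin : volume (Set.Ioc r T ∩ S) < ⊤ :=
            lt_of_le_of_lt (measure_mono Set.inter_subset_left) measure_Ioc_lt_top
          have hnorm := norm_setIntegral_le_of_norm_le_const_ae' (μ := volume)
            (s := Set.Ioc r T ∩ S) (f := F) (C := 2 * B) hfin
            (ae_of_all _ fun x hx => by
              rw [Real.norm_of_nonneg (hF0 x)]
              exact hFle x hx.1.1.le)
          have hsub2 : Set.Ioc r T ∩ S ⊆ {t : ℝ | t ∈ Set.Icc r T ∧ a / 2 ≤ F t} := by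
            intro x hx
            refine ⟨Set.Ioc_subset_Icc_self hx.1, ?_⟩
            rw [hFG x hx.1.1.le]
            exact hx.2
          have hvle : (volume (Set.Ioc r T ∩ S)).toReal ≤ v :=
            ENNReal.toReal_mono hMne (measure_mono hsub2)
          calc (∫ x in Set.Ioc r T ∩ S, F x) ≤ ‖∫ x in Set.Ioc r T ∩ S, F x‖ :=
                le_abs_self _
            _ ≤ 2 * B * (volume (Set.Ioc r T ∩ S)).toReal := hnorm
            _ ≤ 2 * B * v := by nlinarith
        -- second piece
        have hb2 : (∫ x in Set.Ioc r T \ S, F x) ≤ (a / 2) * (T - r) := by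
          have hfin : volume (Set.Ioc r T \ S) < ⊤ :=
            lt_of_le_of_lt (measure_mono Set.diff_subset) measure_Ioc_lt_top
          have hsub : Set.Ioc r T \ S ⊆ Set.Icc r T :=
            fun x hx => Set.Ioc_subset_Icc_self hx.1
          have hnorm := norm_setIntegral_le_of_norm_le_const_ae' (μ := volume)
            (s := Set.Ioc r T \ S) (f := F) (C := a / 2) hfin
            (ae_of_all _ fun x hx => by
              rw [Real.norm_of_nonneg (hF0 x)]
              have hx2 : ¬ (a / 2 ≤ G x) := hx.2
              rw [hFG x hx.1.1.le]
              linarith [not_le.mp hx2])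
          have hv2 : (volume (Set.Ioc r T \ S)).toReal ≤ T - r := by
            have h1 : volume (Set.Ioc r T \ S) ≤ volume (Set.Ioc r T) :=
              measure_mono Set.diff_subset
            have h2' := ENNReal.toReal_mono
              (by simp [Real.volume_Ioc] : volume (Set.Ioc r T) ≠ ⊤) h1
            rwa [Real.volume_Ioc, ENNReal.toReal_ofReal (by linarith)] at h2'
          calc (∫ x in Set.Ioc r T \ S, F x) ≤ ‖∫ x in Set.Ioc r T \ S, F x‖ :=
                le_abs_self _
            _ ≤ (a / 2) * (volume (Set.Ioc r T \ S)).toReal := hnorm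
            _ ≤ (a / 2) * (T - r) := by nlinarith
        have hIeq : (∫ s in r..T, F s) = ∫ s in Set.Ioc r T, F s :=
          intervalIntegral.integral_of_le hrT
        have htot : (∫ s in Set.Ioc r T, F s) ≤ 2 * B * v + (a / 2) * T := by
          rw [← hsplit]
          have : (a / 2) * (T - r) ≤ (a / 2) * T := by nlinarith
          linarith
        calc (1 / T) * ∫ s in r..T, F s
            ≤ (1 / T) * (2 * B * v + (a / 2) * T) := by
              rw [hIeq]
              exact mul_le_mul_of_nonneg_left htot (by positivity)
          _ = 2 * B * (v / T) + a / 2 := by field_simp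
          _ < a := by linarith
  exact hmain (fun s => ⨆ τ ∈ Set.Icc (s - r) s, ‖u (τ + ω) - u τ‖) (fun s => rfl)
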